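/- (Dispersion along the diagonal.) Consider two bidders with equal values v1 = v2 = v ≥ 0 and the prior g with g((l,h)) = g((h,l)) = 1/2, where 0 ≤ l < h ≤ 1. Then for every ε > 0 there exists a calibrated information structure x for g with Rev(x) ≥ v·h − ε. -/

import Mathlib

open scoped Classical

noncomputable section

/-- A CTR pair lies in the unit square. -/
def InUnitSq (r : ℝ × ℝ) : Prop := 0 ≤ r.1 ∧ r.1 ≤ 1 ∧ 0 ≤ r.2 ∧ r.2 ≤ 1

/-- A finitely supported probability mass function on CTR pairs in [0,1]². -/
def IsPrior (g : ℝ × ℝ → ℝ) : Prop :=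
  (Function.support g).Finite ∧ (∀ r, 0 ≤ g r) ∧
  (∀ r, g r ≠ 0 → InUnitSq r) ∧ (∑ᶠ r, g r) = 1

/-- An information structure for the prior `g`: finitely supported, nonnegative,
signals in [0,1]², with `r`-marginal equal to `g`. -/
def IsInfoStructure (g : ℝ × ℝ → ℝ) (x : (ℝ × ℝ) × (ℝ × ℝ) → ℝ) : Prop :=
  (Function.support x).Finite ∧ (∀ p, 0 ≤ x p) ∧
  (∀ p, x p ≠ 0 → InUnitSq p.2) ∧ (∀ r, (∑ᶠ s, x (r, s)) = g r)

/-- Calibration: the posterior mean of `rᵢ` given any signal value `c` of bidder `i`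
equals `c`. -/
def Calibrated (x : (ℝ × ℝ) × (ℝ × ℝ) → ℝ) : Prop :=
  ∀ c : ℝ, 0 ≤ c → c ≤ 1 →
    (∑ᶠ p : (ℝ × ℝ) × (ℝ × ℝ), if p.2.1 = c then x p * (p.1.1 - c) else 0) = 0 ∧
    (∑ᶠ p : (ℝ × ℝ) × (ℝ × ℝ), if p.2.2 = c then x p * (p.1.2 - c) else 0) = 0

/-- Independence: for each bidder `i` and each signal pair `s0` with positive
probability, the conditional mean of `rᵢ` given the full signal pair equals the
conditional mean of `rᵢ` given `sᵢ` alone (stated in cross-multiplied form). -/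
def Independent (x : (ℝ × ℝ) × (ℝ × ℝ) → ℝ) : Prop :=
  ∀ s0 : ℝ × ℝ, 0 < (∑ᶠ r, x (r, s0)) →
    ((∑ᶠ r, x (r, s0) * r.1) *
        (∑ᶠ p : (ℝ × ℝ) × (ℝ × ℝ), if p.2.1 = s0.1 then x p else 0)
      = (∑ᶠ p : (ℝ × ℝ) × (ℝ × ℝ), if p.2.1 = s0.1 then x p * p.1.1 else 0) *
        (∑ᶠ r, x (r, s0))) ∧
    ((∑ᶠ r, x (r, s0) * r.2) *
        (∑ᶠ p : (ℝ × ℝ) × (ℝ × ℝ), if p.2.2 = s0.2 then x p else 0)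
      = (∑ᶠ p : (ℝ × ℝ) × (ℝ × ℝ), if p.2.2 = s0.2 then x p * p.1.2 else 0) *
        (∑ᶠ r, x (r, s0)))

/-- Expected payment of the click-through auction given CTRs `r` and signals `s`,
with uniform tie-breaking (division by zero is zero in Lean, matching t/0 = 0). -/
def pay (v1 v2 : ℝ) (r s : ℝ × ℝ) : ℝ :=
  if v2 * s.2 < v1 * s.1 then r.1 * (v2 * s.2 / s.1)
  else if v1 * s.1 < v2 * s.2 then r.2 * (v1 * s.1 / s.2)
  else (r.1 * (v2 * s.2 / s.1) + r.2 * (v1 * s.1 / s.2)) / 2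

/-- Expected revenue of an information structure. -/
def Rev (v1 v2 : ℝ) (x : (ℝ × ℝ) × (ℝ × ℝ) → ℝ) : ℝ :=
  ∑ᶠ p : (ℝ × ℝ) × (ℝ × ℝ), x p * pay v1 v2 p.1 p.2

/-- Revenue of the no-disclosure information structure. -/
def noDisclosureRev (v1 v2 : ℝ) (g : ℝ × ℝ → ℝ) : ℝ :=
  min (v1 * ∑ᶠ r : ℝ × ℝ, g r * r.1) (v2 * ∑ᶠ r : ℝ × ℝ, g r * r.2)

/-- Revenue of the full-disclosure information structure. -/
def fullDisclosureRev (v1 v2 : ℝ) (g : ℝ × ℝ → ℝ) : ℝ :=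
  ∑ᶠ r : ℝ × ℝ, g r * min (v1 * r.1) (v2 * r.2)


namespace Disp

/-- Signal levels. -/
def cs (l h : ℝ) (n j : ℕ) : ℝ := l + (h - l) * j / n
/-- Weights. -/
def ws (n k : ℕ) : ℝ := ((n - 1).choose k : ℕ) / 2 ^ n
def ptA (l h : ℝ) (n k : ℕ) : (ℝ × ℝ) × (ℝ × ℝ) := ((h, l), (cs l h n (k+1), cs l h n k))
def ptB (l h : ℝ) (n k : ℕ) : (ℝ × ℝ) × (ℝ × ℝ) := ((l, h), (cs l h n k, cs l h n (k+1)))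
def xx (l h : ℝ) (n : ℕ) (p : (ℝ × ℝ) × (ℝ × ℝ)) : ℝ :=
  ∑ k ∈ Finset.range n, ((if p = ptA l h n k then ws n k else 0) +
    (if p = ptB l h n k then ws n k else 0))
def tele (l h : ℝ) (n : ℕ) (c : ℝ) (j : ℕ) : ℝ :=
  if cs l h n j = c then ws n j * (cs l h n j - l) else 0

lemma ws_nonneg (n k : ℕ) : 0 ≤ ws n k := by unfold ws; positivity

lemma ws_top (n : ℕ) (hn : 1 ≤ n) : ws n n = 0 := by
  unfold ws; rw [Nat.choose_eq_zero_of_lt (by omega)]; simp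

lemma cs_zero (l h : ℝ) (n : ℕ) : cs l h n 0 = l := by simp [cs]

lemma key2 (n k : ℕ) (hn : 1 ≤ n) :
    (((n-1).choose k : ℕ) : ℝ) * ((n:ℝ) - (k+1)) = (((n-1).choose (k+1) : ℕ) : ℝ) * ((k:ℝ)+1) := by
  rcases lt_or_ge k n with hk | hk
  · have := Nat.choose_succ_right_eq (n-1) k
    have hcast : ((n - 1 - k : ℕ) : ℝ) = (n:ℝ) - (k+1) := by
      have h3 : n - 1 - k = n - (k+1) := by omega
      rw [h3]
      push_cast [Nat.cast_sub (by omega : k + 1 ≤ n)]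
      ring
    rw [← hcast]
    exact_mod_cast this.symm
  · rw [Nat.choose_eq_zero_of_lt (by omega), Nat.choose_eq_zero_of_lt (by omega)]
    simp

lemma key (l h : ℝ) (n k : ℕ) (hn : 1 ≤ n) :
    ws n k * (h - cs l h n (k+1)) = ws n (k+1) * (cs l h n (k+1) - l) := by
  have hn0 : (n:ℝ) ≠ 0 := by positivity
  have e1 : h - cs l h n (k+1) = (h - l) * ((n:ℝ) - ((k:ℝ)+1)) / n := by
    unfold cs; push_cast; field_simp; ring
  have e2 : cs l h n (k+1) - l = (h - l) * ((k:ℝ)+1) / n := by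
    unfold cs; push_cast; ring
  rw [e1, e2]
  unfold ws
  have := key2 n k hn
  field_simp
  linear_combination (h - l) * this

lemma sum_ws (n : ℕ) (hn : 1 ≤ n) : ∑ k ∈ Finset.range n, ws n k = 1/2 := by
  unfold ws
  rw [← Finset.sum_div, ← Nat.cast_sum]
  have hrange : n = (n-1) + 1 := by omega
  have hsum : ∑ k ∈ Finset.range n, (n-1).choose k = 2 ^ (n-1) := by
    rw [hrange]; exact Nat.sum_range_choose (n-1)
  rw [hsum]
  have h2n : (2:ℝ) ^ n = 2 ^ (n-1) * 2 := by
    nth_rewrite 1 [hrange]; rw [pow_succ]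
  rw [h2n]
  push_cast
  have h2 : (0:ℝ) < 2 ^ (n-1) := by positivity
  field_simp

lemma tele_step (l h : ℝ) (n : ℕ) (hn : 1 ≤ n) (c : ℝ) (k : ℕ) :
    ws n k * ((if cs l h n (k+1) = c then h - c else 0) + (if cs l h n k = c then l - c else 0))
      = tele l h n c (k+1) - tele l h n c k := by
  have K := key l h n k hn
  unfold tele
  split_ifs with h1 h2 h2
  · subst h1
    linear_combination K + ws n k * h2
  · subst h1
    linear_combination K
  · subst h2
    ring
  · ring

lemma calib_sum (l h : ℝ) (n : ℕ) (hn : 1 ≤ n) (c : ℝ) :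
    ∑ k ∈ Finset.range n,
      ws n k * ((if cs l h n (k+1) = c then h - c else 0) + (if cs l h n k = c then l - c else 0))
      = 0 := by
  rw [Finset.sum_congr rfl (fun k _ => tele_step l h n hn c k), Finset.sum_range_sub]
  simp [tele, ws_top n hn, cs_zero]

lemma ws_div (n k : ℕ) (hn : 1 ≤ n) :
    ws n k / ((k:ℝ)+1) = ((n.choose (k+1) : ℕ) : ℝ) / (2^n * n) := by
  have h1 : n - 1 + 1 = n := by omega
  have hid : (n:ℝ) * (((n-1).choose k : ℕ) : ℝ) = ((n.choose (k+1) : ℕ):ℝ) * ((k:ℝ)+1) := by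
    have := Nat.add_one_mul_choose_eq (n-1) k
    rw [h1] at this
    exact_mod_cast this
  have hn0 : (n:ℝ) ≠ 0 := by positivity
  have hk0 : ((k:ℝ)+1) ≠ 0 := by positivity
  unfold ws
  rw [div_div, div_eq_div_iff (by positivity) (by positivity)]
  linear_combination (2:ℝ)^n * hid

lemma sumC (n : ℕ) : (∑ k ∈ Finset.range n, ((n.choose (k+1) : ℕ) : ℝ)) ≤ 2^n := by
  have a := Nat.sum_range_choose n
  have b := Finset.sum_range_succ' (fun i => n.choose i) n
  have hle : (∑ k ∈ Finset.range n, n.choose (k+1)) ≤ 2^n := by omega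
  calc (∑ k ∈ Finset.range n, ((n.choose (k+1) : ℕ) : ℝ))
      = ((∑ k ∈ Finset.range n, n.choose (k+1) : ℕ) : ℝ) := by push_cast; ring
    _ ≤ ((2^n : ℕ) : ℝ) := by exact_mod_cast hle
    _ = 2^n := by push_cast; ring

lemma xx_ne_zero {l h : ℝ} {n : ℕ} {p : (ℝ × ℝ) × (ℝ × ℝ)} (hp : xx l h n p ≠ 0) :
    ∃ k ∈ Finset.range n, p = ptA l h n k ∨ p = ptB l h n k := by
  by_contra hc
  push_neg at hc
  apply hp
  apply Finset.sum_eq_zero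
  intro k hk
  rcases hc k hk with ⟨h1, h2⟩
  simp [h1, h2]

lemma finsum_xx (l h : ℝ) (n : ℕ) (φ : (ℝ × ℝ) × (ℝ × ℝ) → ℝ) :
    ∑ᶠ p, xx l h n p * φ p
      = ∑ k ∈ Finset.range n, ws n k * (φ (ptA l h n k) + φ (ptB l h n k)) := by
  classical
  set S : Finset ((ℝ×ℝ)×(ℝ×ℝ)) :=
    (Finset.range n).image (ptA l h n) ∪ (Finset.range n).image (ptB l h n) with hS
  have hsub : Function.support (fun p => xx l h n p * φ p) ⊆ ↑S := by
    intro p hp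
    have hx : xx l h n p ≠ 0 := by
      intro h0
      apply hp
      simp [h0]
    obtain ⟨k, hk, hor⟩ := xx_ne_zero hx
    rcases hor with rfl | rfl
    · exact Finset.mem_coe.2 (Finset.mem_union_left _ (Finset.mem_image_of_mem _ hk))
    · exact Finset.mem_coe.2 (Finset.mem_union_right _ (Finset.mem_image_of_mem _ hk))
  rw [finsum_eq_sum_of_support_subset _ hsub]
  unfold xx
  simp only [Finset.sum_mul, add_mul, ite_mul, zero_mul]
  rw [Finset.sum_comm]
  refine Finset.sum_congr rfl fun k hk => ?_
  have hA : ptA l h n k ∈ S := Finset.mem_union_left _ (Finset.mem_image_of_mem _ hk)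
  have hB : ptB l h n k ∈ S := Finset.mem_union_right _ (Finset.mem_image_of_mem _ hk)
  rw [Finset.sum_add_distrib, Finset.sum_ite_eq' S (ptA l h n k),
    Finset.sum_ite_eq' S (ptB l h n k), if_pos hA, if_pos hB]
  ring

lemma finsum_xx_marginal (l h : ℝ) (n : ℕ) (r : ℝ × ℝ) :
    ∑ᶠ s, xx l h n (r, s)
      = ∑ k ∈ Finset.range n, ((if r = (h, l) then ws n k else 0) +
          (if r = (l, h) then ws n k else 0)) := by
  classical
  set T : Finset (ℝ × ℝ) :=
    (Finset.range n).image (fun k => (cs l h n (k+1), cs l h n k)) ∪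
      (Finset.range n).image (fun k => (cs l h n k, cs l h n (k+1))) with hT
  have hsub : Function.support (fun s => xx l h n (r, s)) ⊆ ↑T := by
    intro s hs
    obtain ⟨k, hk, hor⟩ := xx_ne_zero hs
    rcases hor with h1 | h1
    · have h2 : s = (cs l h n (k+1), cs l h n k) := congrArg Prod.snd h1
      rw [h2]
      exact Finset.mem_coe.2 (Finset.mem_union_left _ (Finset.mem_image_of_mem _ hk))
    · have h2 : s = (cs l h n k, cs l h n (k+1)) := congrArg Prod.snd h1
      rw [h2]
      exact Finset.mem_coe.2 (Finset.mem_union_right _ (Finset.mem_image_of_mem _ hk))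
  rw [finsum_eq_sum_of_support_subset _ hsub]
  unfold xx
  rw [Finset.sum_comm]
  refine Finset.sum_congr rfl fun k hk => ?_
  have hA : (cs l h n (k+1), cs l h n k) ∈ T :=
    Finset.mem_union_left _ (Finset.mem_image_of_mem _ hk)
  have hB : (cs l h n k, cs l h n (k+1)) ∈ T :=
    Finset.mem_union_right _ (Finset.mem_image_of_mem _ hk)
  have e1 : ∀ s : ℝ × ℝ, (if (r, s) = ptA l h n k then ws n k else 0)
      = (if s = (cs l h n (k+1), cs l h n k) then (if r = (h, l) then ws n k else 0) else 0) := by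
    intro s
    by_cases h1 : r = (h, l) <;> by_cases h2 : s = (cs l h n (k+1), cs l h n k) <;>
      simp [ptA, Prod.ext_iff, h1, h2]
  have e2 : ∀ s : ℝ × ℝ, (if (r, s) = ptB l h n k then ws n k else 0)
      = (if s = (cs l h n k, cs l h n (k+1)) then (if r = (l, h) then ws n k else 0) else 0) := by
    intro s
    by_cases h1 : r = (l, h) <;> by_cases h2 : s = (cs l h n k, cs l h n (k+1)) <;>
      simp [ptB, Prod.ext_iff, h1, h2]
  simp only [e1, e2]
  rw [Finset.sum_add_distrib, Finset.sum_ite_eq' T, Finset.sum_ite_eq' T,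
    if_pos hA, if_pos hB]

lemma cs_nonneg {l h : ℝ} {n : ℕ} (hl : 0 ≤ l) (hlh : l ≤ h) (j : ℕ) : 0 ≤ cs l h n j := by
  unfold cs
  have : 0 ≤ (h - l) * j / n :=
    div_nonneg (mul_nonneg (by linarith) (Nat.cast_nonneg j)) (Nat.cast_nonneg n)
  linarith

lemma cs_mono {l h : ℝ} {n : ℕ} (hlh : l < h) (hn : 1 ≤ n) (k : ℕ) :
    cs l h n k < cs l h n (k+1) := by
  unfold cs
  have hn0 : (0:ℝ) < n := by exact_mod_cast hn
  have h1 : (h - l) * k < (h - l) * (k+1) := by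
    have : (k:ℝ) < (k:ℝ) + 1 := by linarith
    push_cast
    nlinarith
  have := div_lt_div_of_pos_right h1 hn0
  push_cast at this ⊢
  linarith

lemma cs_le_h {l h : ℝ} {n : ℕ} (hlh : l ≤ h) (hn : 1 ≤ n) {j : ℕ} (hj : j ≤ n) :
    cs l h n j ≤ h := by
  unfold cs
  have hn0 : (0:ℝ) < n := by exact_mod_cast hn
  have hjn : (j:ℝ) ≤ n := by exact_mod_cast hj
  have h1 : (h - l) * j / n ≤ (h - l) := by
    rw [div_le_iff₀ hn0]
    nlinarith
  linarith

lemma cs_pos_succ {l h : ℝ} {n : ℕ} (hl : 0 ≤ l) (hlh : l < h) (hn : 1 ≤ n) (k : ℕ) :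
    0 < cs l h n (k+1) := by
  unfold cs
  have hn0 : (0:ℝ) < n := by exact_mod_cast hn
  have : (0:ℝ) < (h - l) * ((k:ℝ) + 1) / n :=
    div_pos (mul_pos (by linarith) (by positivity)) hn0
  push_cast
  linarith

lemma csucc_lb {l h : ℝ} {n : ℕ} (hl : 0 ≤ l) (k : ℕ) :
    (h - l) * ((k:ℝ)+1) / n ≤ cs l h n (k+1) := by
  unfold cs
  push_cast
  linarith

lemma payA {v l h : ℝ} {n : ℕ} (hv : 0 ≤ v) (hl : 0 ≤ l) (hlh : l < h) (hn : 1 ≤ n) (k : ℕ) :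
    pay v v (h, l) (cs l h n (k+1), cs l h n k) = h * (v * cs l h n k / cs l h n (k+1)) := by
  rcases eq_or_lt_of_le hv with hv0 | hv0
  · rw [← hv0]
    simp [pay]
  · have hlt : v * cs l h n k < v * cs l h n (k+1) :=
      mul_lt_mul_of_pos_left (cs_mono hlh hn k) hv0
    rw [pay, if_pos hlt]

lemma payB {v l h : ℝ} {n : ℕ} (hv : 0 ≤ v) (hl : 0 ≤ l) (hlh : l < h) (hn : 1 ≤ n) (k : ℕ) :
    pay v v (l, h) (cs l h n k, cs l h n (k+1)) = h * (v * cs l h n k / cs l h n (k+1)) := by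
  rcases eq_or_lt_of_le hv with hv0 | hv0
  · rw [← hv0]
    simp [pay]
  · have hlt : v * cs l h n k < v * cs l h n (k+1) :=
      mul_lt_mul_of_pos_left (cs_mono hlh hn k) hv0
    rw [pay, if_neg (by simpa using not_lt.2 hlt.le), if_pos (by simpa using hlt)]

lemma ratio_lb {l h : ℝ} {n : ℕ} (hl : 0 ≤ l) (hlh : l < h) (hn : 1 ≤ n) (k : ℕ) :
    1 - 1/((k:ℝ)+1) ≤ cs l h n k / cs l h n (k+1) := by
  have hn0 : (0:ℝ) < n := by exact_mod_cast hn
  have hcp := cs_pos_succ hl hlh hn k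
  have hdiff : cs l h n (k+1) - cs l h n k = (h-l)/n := by
    unfold cs; push_cast; field_simp; ring
  have hlb : (0:ℝ) < (h - l) * ((k:ℝ)+1) / n :=
    div_pos (mul_pos (by linarith) (by positivity)) hn0
  have hub : (cs l h n (k+1) - cs l h n k) / cs l h n (k+1) ≤ 1/((k:ℝ)+1) := by
    rw [hdiff]
    calc (h-l)/n / cs l h n (k+1)
        ≤ (h-l)/n / ((h - l) * ((k:ℝ)+1) / n) :=
          div_le_div_of_nonneg_left (div_nonneg (by linarith) hn0.le) hlb (csucc_lb hl k)
      _ = 1/((k:ℝ)+1) := by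
          have hne : h - l ≠ 0 := by linarith
          have hn0' : (n:ℝ) ≠ 0 := ne_of_gt hn0
          have hk1 : ((k:ℝ)+1) ≠ 0 := by positivity
          field_simp
  have hsplit : cs l h n k / cs l h n (k+1)
      = 1 - (cs l h n (k+1) - cs l h n k) / cs l h n (k+1) := by
    field_simp
    ring
  linarith

lemma rev_bound {v l h : ℝ} {n : ℕ} (hv : 0 ≤ v) (hl : 0 ≤ l) (hlh : l < h) (hh : h ≤ 1)
    (hn : 1 ≤ n) :
    v * h - 2 * v / n
      ≤ ∑ k ∈ Finset.range n, ws n k * (2 * (h * (v * cs l h n k / cs l h n (k+1)))) := by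
  have hn0 : (0:ℝ) < n := by exact_mod_cast hn
  have hh0 : (0:ℝ) < h := lt_of_le_of_lt hl hlh
  have hterm : ∀ k ∈ Finset.range n,
      (2*v*h) * ws n k - (2*v*h/(2^n*n)) * ((n.choose (k+1) : ℕ) : ℝ)
        ≤ ws n k * (2 * (h * (v * cs l h n k / cs l h n (k+1)))) := by
    intro k hk
    have h1 := ratio_lb hl hlh hn k
    have h2 : (2*v*h) * ws n k * (1 - 1/((k:ℝ)+1))
        ≤ (2*v*h) * ws n k * (cs l h n k / cs l h n (k+1)) := by
      apply mul_le_mul_of_nonneg_left h1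
      have := ws_nonneg n k
      positivity
    have h3 : (2*v*h) * ws n k * (1/((k:ℝ)+1))
        = (2*v*h/(2^n*n)) * ((n.choose (k+1) : ℕ) : ℝ) := by
      have hwd := ws_div n k hn
      calc (2*v*h) * ws n k * (1/((k:ℝ)+1)) = (2*v*h) * (ws n k / ((k:ℝ)+1)) := by ring
        _ = (2*v*h) * (((n.choose (k+1) : ℕ) : ℝ) / (2^n * n)) := by rw [hwd]
        _ = (2*v*h/(2^n*n)) * ((n.choose (k+1) : ℕ) : ℝ) := by ring
    calc (2*v*h) * ws n k - (2*v*h/(2^n*n)) * ((n.choose (k+1) : ℕ) : ℝ)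
        = (2*v*h) * ws n k * (1 - 1/((k:ℝ)+1)) := by rw [← h3]; ring
      _ ≤ (2*v*h) * ws n k * (cs l h n k / cs l h n (k+1)) := h2
      _ = ws n k * (2 * (h * (v * cs l h n k / cs l h n (k+1)))) := by ring
  have hsum := Finset.sum_le_sum hterm
  rw [Finset.sum_sub_distrib, ← Finset.mul_sum, ← Finset.mul_sum, sum_ws n hn] at hsum
  have hc0 : (0:ℝ) ≤ 2*v*h/(2^n*n) := by positivity
  have h4 : (2*v*h/(2^n*n)) * (∑ k ∈ Finset.range n, ((n.choose (k+1) : ℕ) : ℝ))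
      ≤ (2*v*h/(2^n*n)) * 2^n := mul_le_mul_of_nonneg_left (sumC n) hc0
  have h5 : (2*v*h/(2^n*n)) * 2^n = 2*v*h/n := by
    have h2n : (2:ℝ)^n ≠ 0 := by positivity
    field_simp
  have h6 : 2*v*h/n ≤ 2*v/n := by
    rw [div_le_div_iff₀ hn0 hn0]
    nlinarith [mul_nonneg (mul_nonneg hv (sub_nonneg.2 hh)) hn0.le]
  linarith

end Disp

/-- dispersion along the diagonal: with two equal-value bidders and
CTRs (l,h) or (h,l) with probability 1/2 each, calibrated information structures
can extract revenue at least v·h − ε for every ε > 0. -/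
theorem dispersion_along_the_diagonal
    (v l h : ℝ) (hv : 0 ≤ v) (hl : 0 ≤ l) (hlh : l < h) (hh : h ≤ 1)
    (g : ℝ × ℝ → ℝ)
    (hgdef : ∀ r, g r = if r = (l, h) ∨ r = (h, l) then 1/2 else 0)
    (ε : ℝ) (hε : 0 < ε) :
    ∃ x : (ℝ × ℝ) × (ℝ × ℝ) → ℝ,
      IsInfoStructure g x ∧ Calibrated x ∧ v * h - ε ≤ Rev v v x := by
  classical
  have hh0 : 0 < h := lt_of_le_of_lt hl hlh
  obtain ⟨n, hn, hne⟩ : ∃ n : ℕ, 1 ≤ n ∧ 2 * v / n ≤ ε := by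
    refine ⟨max 1 ⌈2 * v / ε⌉₊, le_max_left _ _, ?_⟩
    set n := max 1 ⌈2 * v / ε⌉₊ with hnd
    have hn1 : 1 ≤ n := le_max_left _ _
    have hn0 : (0:ℝ) < n := by exact_mod_cast hn1
    have hge : 2 * v / ε ≤ (n : ℝ) := by
      refine le_trans (Nat.le_ceil _) ?_
      exact_mod_cast le_max_right 1 ⌈2 * v / ε⌉₊
    have h2v : 2 * v ≤ (n : ℝ) * ε := by
      have := (div_le_iff₀ hε).1 hge
      linarith
    rw [div_le_iff₀ hn0]
    linarith
  have hn0 : (0:ℝ) < n := by exact_mod_cast hn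
  refine ⟨Disp.xx l h n, ⟨?_, ?_, ?_, ?_⟩, ?_, ?_⟩
  · -- finite support
    apply Set.Finite.subset (Finset.finite_toSet
      ((Finset.range n).image (Disp.ptA l h n) ∪ (Finset.range n).image (Disp.ptB l h n)))
    intro p hp
    obtain ⟨k, hk, hor⟩ := Disp.xx_ne_zero hp
    rcases hor with rfl | rfl
    · exact Finset.mem_coe.2 (Finset.mem_union_left _ (Finset.mem_image_of_mem _ hk))
    · exact Finset.mem_coe.2 (Finset.mem_union_right _ (Finset.mem_image_of_mem _ hk))
  · -- nonnegativity
    intro p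
    apply Finset.sum_nonneg
    intro k _
    have h1 := Disp.ws_nonneg n k
    split_ifs <;> simp <;> linarith
  · -- signals in unit square
    intro p hp
    obtain ⟨k, hk, hor⟩ := Disp.xx_ne_zero hp
    have hk1 : k + 1 ≤ n := Finset.mem_range.1 hk
    have hkn : k ≤ n := by omega
    have b1 : 0 ≤ Disp.cs l h n k := Disp.cs_nonneg hl hlh.le k
    have b2 : 0 ≤ Disp.cs l h n (k+1) := Disp.cs_nonneg hl hlh.le (k+1)
    have b3 : Disp.cs l h n k ≤ 1 := le_trans (Disp.cs_le_h hlh.le hn hkn) hh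
    have b4 : Disp.cs l h n (k+1) ≤ 1 := le_trans (Disp.cs_le_h hlh.le hn hk1) hh
    rcases hor with rfl | rfl
    · exact ⟨b2, b4, b1, b3⟩
    · exact ⟨b1, b3, b2, b4⟩
  · -- marginal
    intro r
    rw [Disp.finsum_xx_marginal, hgdef]
    have hne2 : ((h, l) : ℝ × ℝ) ≠ (l, h) := by
      intro heq
      rw [Prod.mk.injEq] at heq
      linarith [heq.1]
    by_cases h1 : r = (h, l)
    · subst h1
      rw [if_pos (Or.inr rfl)]
      have e3 : ∀ k ∈ Finset.range n,
          ((if ((h, l) : ℝ × ℝ) = (h, l) then Disp.ws n k else 0) +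
            (if ((h, l) : ℝ × ℝ) = (l, h) then Disp.ws n k else 0)) = Disp.ws n k := by
        intro k _
        rw [if_pos rfl, if_neg hne2, add_zero]
      rw [Finset.sum_congr rfl e3]
      exact Disp.sum_ws n hn
    · by_cases h2 : r = (l, h)
      · subst h2
        rw [if_pos (Or.inl rfl)]
        have e3 : ∀ k ∈ Finset.range n,
            ((if ((l, h) : ℝ × ℝ) = (h, l) then Disp.ws n k else 0) +
              (if ((l, h) : ℝ × ℝ) = (l, h) then Disp.ws n k else 0)) = Disp.ws n k := by
          intro k _
          rw [if_pos rfl, if_neg (Ne.symm hne2), zero_add]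
        rw [Finset.sum_congr rfl e3]
        exact Disp.sum_ws n hn
      · rw [if_neg (by tauto)]
        simp [h1, h2]
  · -- calibrated
    intro c hc0 hc1
    constructor
    · have e : (∑ᶠ p : (ℝ × ℝ) × (ℝ × ℝ), if p.2.1 = c then Disp.xx l h n p * (p.1.1 - c) else 0)
          = ∑ᶠ p : (ℝ × ℝ) × (ℝ × ℝ),
              Disp.xx l h n p * (if p.2.1 = c then p.1.1 - c else 0) := by
        apply finsum_congr
        intro p
        by_cases hpc : p.2.1 = c <;> simp [hpc]
      rw [e, Disp.finsum_xx l h n (fun p => if p.2.1 = c then p.1.1 - c else 0)]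
      simp only [Disp.ptA, Disp.ptB]
      exact Disp.calib_sum l h n hn c
    · have e : (∑ᶠ p : (ℝ × ℝ) × (ℝ × ℝ), if p.2.2 = c then Disp.xx l h n p * (p.1.2 - c) else 0)
          = ∑ᶠ p : (ℝ × ℝ) × (ℝ × ℝ),
              Disp.xx l h n p * (if p.2.2 = c then p.1.2 - c else 0) := by
        apply finsum_congr
        intro p
        by_cases hpc : p.2.2 = c <;> simp [hpc]
      rw [e, Disp.finsum_xx l h n (fun p => if p.2.2 = c then p.1.2 - c else 0)]
      simp only [Disp.ptA, Disp.ptB]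
      have e2 : ∀ k ∈ Finset.range n,
          Disp.ws n k * ((if Disp.cs l h n k = c then l - c else 0) +
            (if Disp.cs l h n (k+1) = c then h - c else 0))
          = Disp.ws n k * ((if Disp.cs l h n (k+1) = c then h - c else 0) +
            (if Disp.cs l h n k = c then l - c else 0)) := by
        intro k _
        ring
      refine (Finset.sum_congr rfl e2).trans ?_
      exact Disp.calib_sum l h n hn c
  · -- revenue
    have hrev : Rev v v (Disp.xx l h n)
        = ∑ k ∈ Finset.range n, Disp.ws n k
            * (2 * (h * (v * Disp.cs l h n k / Disp.cs l h n (k+1)))) := by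
      rw [Rev, Disp.finsum_xx l h n (fun p => pay v v p.1 p.2)]
      refine Finset.sum_congr rfl fun k hk => ?_
      simp only [Disp.ptA, Disp.ptB]
      rw [Disp.payA hv hl hlh hn k, Disp.payB hv hl hlh hn k]
      ring
    rw [hrev]
    have := Disp.rev_bound hv hl hlh hh hn
    linarith
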